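/- Let (S,d) be a bounded metric space with a self-map g, and {Xⁿ} a dynamical quasi-visual approximation of width w of (S,d), with constants τ, ρ ∈ (0,1) such that diam(Y) ≥ τ^k·diam(X) and diam(Y) ≤ C₀·ρ^k·diam(X) whenever X ∈ Xⁿ, Y ∈ X^{n+k} intersect, and set ν := log(1/ρ)/log(1/τ) ∈ (0,1]. Then for each R > 0 there exists C = C(R) ≥ 1 such that d(gⁿ(x), gⁿ(y)) ≤ C·(d(x,y)/diam(Z^{n+1}))^ν whenever n ∈ ℕ, Z^{n+1} ∈ X^{n+1}, z₀ ∈ Z^{n+1}, and x,y ∈ B(z₀, R·diam(Z^{n+1})). -/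

import Mathlib

open Metric Set

variable {S : Type*}

/-- A chain of tiles in a cover `T`: consecutive tiles intersect. -/
def TileChain (T : Set (Set S)) (A B : Set S) (k : ℕ) : Prop :=
  ∃ c : ℕ → Set S, c 0 = A ∧ c k = B ∧ (∀ i, i ≤ k → c i ∈ T) ∧
    ∀ i, i < k → (c i ∩ c (i + 1)).Nonempty

/-- The width-`w` neighborhood `U_w(A)` of a tile `A` in a cover `T`. -/
def Uw (T : Set (Set S)) (w : ℕ) (A : Set S) : Set S :=
  ⋃₀ {B | B ∈ T ∧ ∃ k, k ≤ w ∧ TileChain T A B k}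

/-- The `U_w`-proximity function associated with a sequence of covers. -/
noncomputable def prox (X : ℕ → Set (Set S)) (w : ℕ) (x y : S) : ℕ∞ :=
  ⨆ n ∈ {n : ℕ | ∃ A ∈ X n, ∃ B ∈ X n, x ∈ A ∧ y ∈ B ∧
    (Uw (X n) w A ∩ Uw (X n) w B).Nonempty}, (n : ℕ∞)

/-- `{Xⁿ}` is a quasi-visual approximation of width `w` of the metric space `S`. -/
def IsQVA [MetricSpace S] (X : ℕ → Set (Set S)) (w : ℕ) : Prop :=
  (∀ n, ⋃₀ X n = Set.univ) ∧ X 0 = {Set.univ} ∧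
  (∃ C : ℝ, 1 ≤ C ∧
    (∀ n, ∀ A ∈ X n, ∀ B ∈ X n, (A ∩ B).Nonempty →
      Metric.diam A ≤ C * Metric.diam B) ∧
    (∀ n, ∀ A ∈ X n, ∀ B ∈ X n, Uw (X n) w A ∩ Uw (X n) w B = ∅ →
      ∀ a ∈ A, ∀ b ∈ B, Metric.diam A ≤ C * dist a b) ∧
    (∀ n, ∀ A ∈ X n, ∀ B ∈ X (n + 1), (A ∩ B).Nonempty →
      Metric.diam A ≤ C * Metric.diam B ∧ Metric.diam B ≤ C * Metric.diam A)) ∧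
  (∃ (k₀ : ℕ) (lam : ℝ), 0 < k₀ ∧ 0 < lam ∧ lam < 1 ∧
    ∀ n, ∀ A ∈ X n, ∀ B ∈ X (n + k₀), (A ∩ B).Nonempty →
      Metric.diam B ≤ lam * Metric.diam A)

/- ### Auxiliary lemmas about tile chains -/

lemma tileChain_self {T : Set (Set S)} {A : Set S} (hA : A ∈ T) : TileChain T A A 0 :=
  ⟨fun _ => A, rfl, rfl, fun _ _ => hA, fun i h => absurd h (Nat.not_lt_zero i)⟩

lemma subset_Uw {T : Set (Set S)} {w : ℕ} {A : Set S} (hA : A ∈ T) : A ⊆ Uw T w A :=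
  fun z hz => ⟨A, ⟨hA, 0, Nat.zero_le _, tileChain_self hA⟩, hz⟩

lemma tileChain_symm {T : Set (Set S)} {A B : Set S} {k : ℕ} (h : TileChain T A B k) :
    TileChain T B A k := by
  obtain ⟨c, h0, hk, hmem, hint⟩ := h
  refine ⟨fun i => c (k - i), by simpa using hk, by simpa using h0,
    fun i _ => hmem _ (by omega), fun i hi => ?_⟩
  have h1 := hint (k - (i + 1)) (by omega)
  have e1 : k - (i + 1) + 1 = k - i := by omega
  rw [e1] at h1
  rw [Set.inter_comm]
  exact h1

lemma tileChain_concat {T : Set (Set S)} {A B₁ B₂ B : Set S} {k₁ k₂ : ℕ}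
    (h1 : TileChain T A B₁ k₁) (h2 : TileChain T B₂ B k₂) (hj : (B₁ ∩ B₂).Nonempty) :
    TileChain T A B (k₁ + 1 + k₂) := by
  obtain ⟨c, hc0, hck, hcm, hci⟩ := h1
  obtain ⟨d, hd0, hdk, hdm, hdi⟩ := h2
  refine ⟨fun i => if i ≤ k₁ then c i else d (i - (k₁ + 1)), by simpa using hc0, ?_, ?_, ?_⟩
  · have e0 : ¬ (k₁ + 1 + k₂ ≤ k₁) := by omega
    dsimp only
    rw [if_neg e0]
    have e1 : k₁ + 1 + k₂ - (k₁ + 1) = k₂ := by omega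
    rw [e1, hdk]
  · intro i hi
    dsimp only
    by_cases h : i ≤ k₁
    · rw [if_pos h]; exact hcm i h
    · rw [if_neg h]; exact hdm _ (by omega)
  · intro i hi
    dsimp only
    rcases lt_trichotomy i k₁ with h | h | h
    · have e1 : i ≤ k₁ := le_of_lt h
      have e2 : i + 1 ≤ k₁ := by omega
      rw [if_pos e1, if_pos e2]
      exact hci i h
    · subst h
      have e2 : ¬ (i + 1 ≤ i) := by omega
      have e3 : i + 1 - (i + 1) = 0 := by omega
      rw [if_pos (le_refl i), if_neg e2, e3, hd0, hck]
      exact hj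
    · have e1 : ¬ (i ≤ k₁) := by omega
      have e2 : ¬ (i + 1 ≤ k₁) := by omega
      rw [if_neg e1, if_neg e2]
      have e3 : i + 1 - (k₁ + 1) = (i - (k₁ + 1)) + 1 := by omega
      rw [e3]
      exact hdi _ (by omega)

lemma exists_chain_of_Uw {T : Set (Set S)} {w : ℕ} {A B : Set S}
    (h : (Uw T w A ∩ Uw T w B).Nonempty) :
    ∃ K, K ≤ 2 * w + 1 ∧ TileChain T A B K := by
  obtain ⟨p, hpA, hpB⟩ := h
  obtain ⟨B₁, ⟨hB₁T, k₁, hk₁, hch₁⟩, hpB₁⟩ := hpA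
  obtain ⟨B₂, ⟨hB₂T, k₂, hk₂, hch₂⟩, hpB₂⟩ := hpB
  exact ⟨k₁ + 1 + k₂, by omega, tileChain_concat hch₁ (tileChain_symm hch₂) ⟨p, hpB₁, hpB₂⟩⟩

lemma dist_le_of_chain [MetricSpace S] {c : ℕ → Set S} {k : ℕ} {Dm : ℝ}
    (hbd : ∀ i, i ≤ k → Bornology.IsBounded (c i))
    (hint : ∀ i, i < k → (c i ∩ c (i + 1)).Nonempty)
    {a b : S} (ha : a ∈ c 0) (hb : b ∈ c k)
    (hd : ∀ i, i ≤ k → Metric.diam (c i) ≤ Dm) :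
    dist a b ≤ ((k : ℝ) + 1) * Dm := by
  induction k generalizing b with
  | zero =>
    simpa using le_trans (Metric.dist_le_diam_of_mem (hbd 0 le_rfl) ha hb) (hd 0 le_rfl)
  | succ k ih =>
    obtain ⟨p, hp1, hp2⟩ := hint k (Nat.lt_succ_self k)
    have h1 : dist a p ≤ ((k : ℝ) + 1) * Dm :=
      ih (fun i hi => hbd i (by omega)) (fun i hi => hint i (by omega)) hp1
        (fun i hi => hd i (by omega))
    have h2 : dist p b ≤ Metric.diam (c (k + 1)) :=
      Metric.dist_le_diam_of_mem (hbd _ le_rfl) hp2 hb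
    have h3 := hd (k + 1) le_rfl
    calc dist a b ≤ dist a p + dist p b := dist_triangle a p b
      _ ≤ ((k : ℝ) + 1) * Dm + Dm := add_le_add h1 (le_trans h2 h3)
      _ = (((k + 1 : ℕ) : ℝ) + 1) * Dm := by push_cast; ring

lemma diam_chain_le [MetricSpace S] {T : Set (Set S)} {Cc : ℝ} (hC : 1 ≤ Cc)
    (hcomp : ∀ A ∈ T, ∀ B ∈ T, (A ∩ B).Nonempty → Metric.diam A ≤ Cc * Metric.diam B)
    {c : ℕ → Set S} {k : ℕ}
    (hmem : ∀ i, i ≤ k → c i ∈ T) (hint : ∀ i, i < k → (c i ∩ c (i + 1)).Nonempty) :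
    Metric.diam (c k) ≤ Cc ^ k * Metric.diam (c 0) := by
  induction k with
  | zero => simp
  | succ k ih =>
    have h1 : Metric.diam (c (k + 1)) ≤ Cc * Metric.diam (c k) := by
      apply hcomp _ (hmem (k + 1) le_rfl) _ (hmem k (by omega))
      rw [Set.inter_comm]
      exact hint k (Nat.lt_succ_self k)
    calc Metric.diam (c (k + 1)) ≤ Cc * Metric.diam (c k) := h1
      _ ≤ Cc * (Cc ^ k * Metric.diam (c 0)) := by
          apply mul_le_mul_of_nonneg_left _ (le_trans zero_le_one hC)
          exact ih (fun i hi => hmem i (by omega)) (fun i hi => hint i (by omega))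
      _ = Cc ^ (k + 1) * Metric.diam (c 0) := by ring

lemma image_iterate_mem (g : S → S) (X : ℕ → Set (Set S))
    (hdyn : ∀ n : ℕ, 1 ≤ n → ∀ A ∈ X (n + 1), g '' A ∈ X n) :
    ∀ t M : ℕ, 1 ≤ M → ∀ A ∈ X (M + t), g^[t] '' A ∈ X M := by
  intro t
  induction t with
  | zero => intro M _ A hA; simpa using hA
  | succ t ih =>
    intro M hM A hA
    have hA' : A ∈ X ((M + 1) + t) := by
      rw [show (M + 1) + t = M + (t + 1) by omega]; exact hA
    have h1 : g^[t] '' A ∈ X (M + 1) := ih (M + 1) (by omega) A hA'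
    have h2 : g '' (g^[t] '' A) ∈ X M := hdyn M hM _ h1
    rw [Function.iterate_succ', Set.image_comp]
    exact h2

set_option maxHeartbeats 2000000 in
/-- Distortion estimate for a dynamical quasi-visual approximation: with constants
`τ, ρ ∈ (0,1)` controlling the diameters of intersecting tiles across levels and
`ν = log(1/ρ)/log(1/τ)`, for each `R > 0` there is `C = C(R) ≥ 1` such that
`d(gⁿ(x), gⁿ(y)) ≤ C·(d(x,y)/diam(Z^{n+1}))^ν` whenever `Z^{n+1} ∈ X^{n+1}`,
`z₀ ∈ Z^{n+1}`, and `x, y ∈ B(z₀, R·diam(Z^{n+1}))`. -/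
theorem stmt19 (S : Type*) [MetricSpace S]
    (hb : Bornology.IsBounded (Set.univ : Set S))
    (hpts : ∃ p q : S, p ≠ q)
    (g : S → S) (X : ℕ → Set (Set S)) (w : ℕ)
    (hqva : IsQVA X w)
    (hdyn : ∀ n : ℕ, 1 ≤ n → ∀ A ∈ X (n + 1), g '' A ∈ X n)
    (τ ρ C₀ : ℝ) (hτ0 : 0 < τ) (hτ1 : τ < 1) (hρ0 : 0 < ρ) (hρ1 : ρ < 1) (hC₀ : 1 ≤ C₀)
    (hlow : ∀ n k : ℕ, ∀ A ∈ X n, ∀ B ∈ X (n + k), (A ∩ B).Nonempty →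
      τ ^ k * Metric.diam A ≤ Metric.diam B)
    (hupp : ∀ n k : ℕ, ∀ A ∈ X n, ∀ B ∈ X (n + k), (A ∩ B).Nonempty →
      Metric.diam B ≤ C₀ * ρ ^ k * Metric.diam A) :
    ∀ R : ℝ, 0 < R → ∃ C : ℝ, 1 ≤ C ∧
      ∀ n : ℕ, 1 ≤ n → ∀ Z ∈ X (n + 1), ∀ z₀ ∈ Z,
        ∀ x ∈ Metric.ball z₀ (R * Metric.diam Z),
        ∀ y ∈ Metric.ball z₀ (R * Metric.diam Z),
          dist (g^[n] x) (g^[n] y) ≤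
            C * (dist x y / Metric.diam Z) ^ (Real.log (1 / ρ) / Real.log (1 / τ)) := by
  classical
  intro R hR
  obtain ⟨hcov, hX0, ⟨C, hC1, hcomp, hsep, hconsec⟩, -⟩ := hqva
  have hC0' : (0:ℝ) < C := lt_of_lt_of_le one_pos hC1
  have hC₀0 : (0:ℝ) < C₀ := lt_of_lt_of_le one_pos hC₀
  set dS := Metric.diam (Set.univ : Set S) with hdS_def
  obtain ⟨p, q, hpq⟩ := hpts
  have hdS0 : 0 < dS :=
    lt_of_lt_of_le (dist_pos.mpr hpq) (Metric.dist_le_diam_of_mem hb trivial trivial)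
  have huniv : (Set.univ : Set S) ∈ X 0 := by rw [hX0]; exact Set.mem_singleton _
  have htile : ∀ (k : ℕ) (z : S), ∃ A ∈ X k, z ∈ A := by
    intro k z
    have hz : z ∈ ⋃₀ X k := by rw [hcov k]; trivial
    obtain ⟨A, hA, hzA⟩ := hz
    exact ⟨A, hA, hzA⟩
  have hbdd : ∀ s : Set S, Bornology.IsBounded s := fun s => hb.subset (Set.subset_univ s)
  have tile_upp : ∀ (k : ℕ), ∀ A ∈ X k, A.Nonempty → Metric.diam A ≤ C₀ * ρ ^ k * dS := by
    intro k A hA hne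
    exact hupp 0 k Set.univ huniv A (by rw [Nat.zero_add]; exact hA)
      (by rw [Set.univ_inter]; exact hne)
  have tile_low : ∀ (k : ℕ), ∀ A ∈ X k, A.Nonempty → τ ^ k * dS ≤ Metric.diam A := by
    intro k A hA hne
    exact hlow 0 k Set.univ huniv A (by rw [Nat.zero_add]; exact hA)
      (by rw [Set.univ_inter]; exact hne)
  -- the exponent ν
  set ν := Real.log (1 / ρ) / Real.log (1 / τ) with hν_def
  have hlogτ : Real.log τ < 0 := Real.log_neg hτ0 hτ1
  have hlogρ : Real.log ρ < 0 := Real.log_neg hρ0 hρ1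
  have hν_eq : ν = Real.log ρ / Real.log τ := by
    rw [hν_def, one_div, one_div, Real.log_inv, Real.log_inv, neg_div_neg_eq]
  have hν0 : 0 < ν := by
    rw [hν_eq]
    exact div_pos_of_neg_of_neg hlogρ hlogτ
  have hτν : τ ^ ν = ρ := by
    rw [Real.rpow_def_of_pos hτ0, hν_eq, mul_comm (Real.log τ),
      div_mul_cancel₀ _ (ne_of_lt hlogτ)]
    exact Real.exp_log hρ0
  have hkey : ∀ k : ℕ, ((τ : ℝ) ^ k) ^ ν = ρ ^ k := by
    intro k
    rw [← Real.rpow_natCast τ k, ← Real.rpow_mul (le_of_lt hτ0), mul_comm ((k : ℕ) : ℝ) ν,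
      Real.rpow_mul (le_of_lt hτ0), hτν, Real.rpow_natCast]
  -- the constant N = N(R) and κ
  have hCCR : (0:ℝ) < 1 / (C * C₀ * R) :=
    div_pos one_pos (mul_pos (mul_pos hC0' hC₀0) hR)
  obtain ⟨N, hN⟩ : ∃ N : ℕ, ρ ^ N < 1 / (C * C₀ * R) :=
    exists_pow_lt_of_lt_one hCCR hρ1
  have hCpow : (0:ℝ) < C ^ (2 * w + 1) := pow_pos hC0' _
  set κ := τ ^ N / (C₀ * C ^ (2 * w + 1)) with hκ_def
  have hκ0 : 0 < κ := div_pos (pow_pos hτ0 _) (mul_pos hC₀0 hCpow)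
  have hκle : κ ≤ 1 / C ^ (2 * w + 1) := by
    rw [hκ_def, div_le_div_iff₀ (mul_pos hC₀0 hCpow) hCpow]
    have h1 : τ ^ N ≤ 1 := pow_le_one₀ hτ0.le hτ1.le
    nlinarith
  -- the final constant
  have hβ : (0:ℝ) < (κ / C) ^ ν := Real.rpow_pos_of_pos (div_pos hκ0 hC0') ν
  have hβ₂ : (0:ℝ) < (κ / (C * C₀)) ^ ν :=
    Real.rpow_pos_of_pos (div_pos hκ0 (mul_pos hC0' hC₀0)) ν
  set Γ₁ := (2 * (w : ℝ) + 2) * C₀ * dS / (κ / C) ^ ν with hΓ₁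
  set Γ₂ := dS / (κ / (C * C₀)) ^ ν with hΓ₂
  have hΓ₁0 : 0 ≤ Γ₁ :=
    div_nonneg (mul_nonneg (mul_nonneg (by positivity) hC₀0.le) hdS0.le) hβ.le
  have hΓ₂0 : 0 ≤ Γ₂ := div_nonneg hdS0.le hβ₂.le
  refine ⟨1 + Γ₁ + Γ₂, by linarith, ?_⟩
  intro n hn Z hZ z₀ hz₀ x hx y hy
  have hZne : Z.Nonempty := ⟨z₀, hz₀⟩
  have hD0 : 0 < Metric.diam Z :=
    lt_of_lt_of_le (by positivity) (tile_low (n + 1) Z hZ hZne)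
  by_cases hxy : x = y
  · subst hxy
    rw [dist_self]
    exact mul_nonneg (by linarith)
      (Real.rpow_nonneg (div_nonneg dist_nonneg hD0.le) _)
  have hxz : dist x z₀ < R * Metric.diam Z := mem_ball.mp hx
  -- CLAIM 1: lower diameter bound for tiles containing x at deep levels
  have claim1 : ∀ s : ℕ, ∀ T' ∈ X (n + 1 + s), x ∈ T' →
      κ * (τ ^ s * Metric.diam Z) ≤ Metric.diam T' := by
    intro s T' hT' hxT'
    set Pz : ℕ → Prop := fun k => ∃ A ∈ X k, ∃ B ∈ X k, x ∈ A ∧ z₀ ∈ B ∧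
      (Uw (X k) w A ∩ Uw (X k) w B).Nonempty with hPz_def
    have hPz0 : Pz 0 := ⟨Set.univ, huniv, Set.univ, huniv, trivial, trivial,
      ⟨x, subset_Uw huniv trivial, subset_Uw huniv trivial⟩⟩
    obtain ⟨l, hlle, hlP, hlmax⟩ : ∃ l, l ≤ n + 1 + s ∧ Pz l ∧
        ∀ k, l < k → k ≤ n + 1 + s → ¬ Pz k :=
      ⟨Nat.findGreatest Pz (n + 1 + s), Nat.findGreatest_le _,
        Nat.findGreatest_spec (Nat.zero_le _) hPz0,
        fun k hk hk' => Nat.findGreatest_is_greatest hk hk'⟩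
    obtain ⟨A₁, hA₁, B₁, hB₁, hxA₁, hzB₁, hUw⟩ := hlP
    obtain ⟨K, hK, c, hc0, hcK, hcm, hci⟩ := exists_chain_of_Uw hUw
    have hBA : Metric.diam B₁ ≤ C ^ (2 * w + 1) * Metric.diam A₁ := by
      have h1 : Metric.diam (c K) ≤ C ^ K * Metric.diam (c 0) :=
        diam_chain_le hC1 (hcomp l) hcm hci
      rw [hc0, hcK] at h1
      calc Metric.diam B₁ ≤ C ^ K * Metric.diam A₁ := h1
        _ ≤ C ^ (2 * w + 1) * Metric.diam A₁ :=
          mul_le_mul_of_nonneg_right (pow_le_pow_right₀ hC1 hK) Metric.diam_nonneg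
    have hA₁T : τ ^ (n + 1 + s - l) * Metric.diam A₁ ≤ Metric.diam T' :=
      hlow l (n + 1 + s - l) A₁ hA₁ T'
        (by rw [show l + (n + 1 + s - l) = n + 1 + s by omega]; exact hT') ⟨x, hxA₁, hxT'⟩
    rcases le_or_gt (n + 1) l with hcase | hcase
    · -- l ≥ n + 1
      have hB₁Z : τ ^ (l - (n + 1)) * Metric.diam Z ≤ Metric.diam B₁ :=
        hlow (n + 1) (l - (n + 1)) Z hZ B₁
          (by rw [show n + 1 + (l - (n + 1)) = l by omega]; exact hB₁) ⟨z₀, hz₀, hzB₁⟩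
      have hexp : τ ^ (n + 1 + s - l) * τ ^ (l - (n + 1)) = τ ^ s := by
        rw [← pow_add]
        congr 1
        omega
      have ha : τ ^ (l - (n + 1)) * Metric.diam Z / C ^ (2 * w + 1) ≤ Metric.diam A₁ := by
        rw [div_le_iff₀ hCpow]
        calc τ ^ (l - (n + 1)) * Metric.diam Z ≤ Metric.diam B₁ := hB₁Z
          _ ≤ C ^ (2 * w + 1) * Metric.diam A₁ := hBA
          _ = Metric.diam A₁ * C ^ (2 * w + 1) := mul_comm _ _
      have hstep : τ ^ s * Metric.diam Z / C ^ (2 * w + 1) ≤ Metric.diam T' := by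
        calc τ ^ s * Metric.diam Z / C ^ (2 * w + 1)
            = τ ^ (n + 1 + s - l) * (τ ^ (l - (n + 1)) * Metric.diam Z / C ^ (2 * w + 1)) := by
              rw [← hexp]; ring
          _ ≤ τ ^ (n + 1 + s - l) * Metric.diam A₁ :=
              mul_le_mul_of_nonneg_left ha (pow_nonneg hτ0.le _)
          _ ≤ Metric.diam T' := hA₁T
      calc κ * (τ ^ s * Metric.diam Z)
          ≤ (1 / C ^ (2 * w + 1)) * (τ ^ s * Metric.diam Z) :=
            mul_le_mul_of_nonneg_right hκle
              (mul_nonneg (pow_nonneg hτ0.le _) hD0.le)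
        _ = τ ^ s * Metric.diam Z / C ^ (2 * w + 1) := by ring
        _ ≤ Metric.diam T' := hstep
    · -- l < n + 1 : use separation at level l + 1
      have hl1 : l + 1 ≤ n + 1 + s := by omega
      have hnotP : ¬ Pz (l + 1) := hlmax (l + 1) (by omega) hl1
      obtain ⟨A₂, hA₂, hxA₂⟩ := htile (l + 1) x
      obtain ⟨B₂, hB₂, hzB₂⟩ := htile (l + 1) z₀
      have hUw2 : Uw (X (l + 1)) w B₂ ∩ Uw (X (l + 1)) w A₂ = ∅ := by
        rw [← Set.not_nonempty_iff_eq_empty]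
        intro hne
        exact hnotP ⟨A₂, hA₂, B₂, hB₂, hxA₂, hzB₂, by rwa [Set.inter_comm] at hne⟩
      have hsepB : Metric.diam B₂ ≤ C * dist z₀ x :=
        hsep (l + 1) B₂ hB₂ A₂ hA₂ hUw2 z₀ hzB₂ x hxA₂
      have hDB : Metric.diam Z ≤ C₀ * ρ ^ (n - l) * Metric.diam B₂ :=
        hupp (l + 1) (n - l) B₂ hB₂ Z
          (by rw [show l + 1 + (n - l) = n + 1 by omega]; exact hZ) ⟨z₀, hzB₂, hz₀⟩
      have hρnl : 1 / (C * C₀ * R) < ρ ^ (n - l) := by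
        have hpow0 : (0:ℝ) < C₀ * ρ ^ (n - l) := mul_pos hC₀0 (pow_pos hρ0 _)
        have hd2 : dist z₀ x < R * Metric.diam Z := by rw [dist_comm]; exact hxz
        have h1 : Metric.diam Z ≤ C₀ * ρ ^ (n - l) * (C * dist z₀ x) :=
          le_trans hDB (mul_le_mul_of_nonneg_left hsepB hpow0.le)
        have h3 : Metric.diam Z < C₀ * ρ ^ (n - l) * (C * (R * Metric.diam Z)) :=
          lt_of_le_of_lt h1 (mul_lt_mul_of_pos_left
            (mul_lt_mul_of_pos_left hd2 hC0') hpow0)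
        rw [div_lt_iff₀ (mul_pos (mul_pos hC0' hC₀0) hR)]
        nlinarith [hD0]
      have hnl : n - l < N := by
        by_contra hcon
        push_neg at hcon
        have h1 : ρ ^ (n - l) ≤ ρ ^ N := pow_le_pow_of_le_one hρ0.le hρ1.le hcon
        linarith
      have hB₁D : Metric.diam Z / C₀ ≤ Metric.diam B₁ := by
        have h1 : Metric.diam Z ≤ C₀ * ρ ^ (n + 1 - l) * Metric.diam B₁ :=
          hupp l (n + 1 - l) B₁ hB₁ Z
            (by rw [show l + (n + 1 - l) = n + 1 by omega]; exact hZ) ⟨z₀, hzB₁, hz₀⟩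
        rw [div_le_iff₀ hC₀0]
        have hρle : ρ ^ (n + 1 - l) ≤ 1 := pow_le_one₀ hρ0.le hρ1.le
        calc Metric.diam Z ≤ C₀ * ρ ^ (n + 1 - l) * Metric.diam B₁ := h1
          _ ≤ C₀ * 1 * Metric.diam B₁ :=
              mul_le_mul_of_nonneg_right
                (mul_le_mul_of_nonneg_left hρle hC₀0.le) Metric.diam_nonneg
          _ = Metric.diam B₁ * C₀ := by ring
      have hA₁D : Metric.diam Z / (C₀ * C ^ (2 * w + 1)) ≤ Metric.diam A₁ := by
        rw [div_le_iff₀ (mul_pos hC₀0 hCpow)]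
        have h1 : Metric.diam Z ≤ Metric.diam B₁ * C₀ := (div_le_iff₀ hC₀0).mp hB₁D
        calc Metric.diam Z ≤ Metric.diam B₁ * C₀ := h1
          _ ≤ (C ^ (2 * w + 1) * Metric.diam A₁) * C₀ :=
              mul_le_mul_of_nonneg_right hBA hC₀0.le
          _ = Metric.diam A₁ * (C₀ * C ^ (2 * w + 1)) := by ring
      have hτmono : τ ^ (s + N) ≤ τ ^ (n + 1 + s - l) :=
        pow_le_pow_of_le_one hτ0.le hτ1.le (by omega)
      calc κ * (τ ^ s * Metric.diam Z)
          = τ ^ (s + N) * (Metric.diam Z / (C₀ * C ^ (2 * w + 1))) := by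
            rw [hκ_def, pow_add]; ring
        _ ≤ τ ^ (n + 1 + s - l) * (Metric.diam Z / (C₀ * C ^ (2 * w + 1))) :=
            mul_le_mul_of_nonneg_right hτmono
              (div_nonneg hD0.le (mul_pos hC₀0 hCpow).le)
        _ ≤ τ ^ (n + 1 + s - l) * Metric.diam A₁ :=
            mul_le_mul_of_nonneg_left hA₁D (pow_nonneg hτ0.le _)
        _ ≤ Metric.diam T' := hA₁T
  -- proximity set for x, y
  set P : ℕ → Prop := fun k => ∃ A ∈ X k, ∃ B ∈ X k, x ∈ A ∧ y ∈ B ∧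
    (Uw (X k) w A ∩ Uw (X k) w B).Nonempty with hP_def
  have hP0 : P 0 := ⟨Set.univ, huniv, Set.univ, huniv, trivial, trivial,
    ⟨x, subset_Uw huniv trivial, subset_Uw huniv trivial⟩⟩
  have hdxy : 0 < dist x y := dist_pos.mpr hxy
  have hPbound : ∀ k, P k → dist x y ≤ (2 * (w : ℝ) + 2) * (C₀ * ρ ^ k * dS) := by
    intro k hk
    obtain ⟨A, hA, B, hB, hxA, hyB, hUw⟩ := hk
    obtain ⟨K, hK, c, hc0, hcK, hcm, hci⟩ := exists_chain_of_Uw hUw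
    have hne : ∀ i, i ≤ K → (c i).Nonempty := by
      intro i hi
      rcases lt_or_eq_of_le hi with h | h
      · obtain ⟨z, hz, -⟩ := hci i h
        exact ⟨z, hz⟩
      · subst h
        exact ⟨y, hcK ▸ hyB⟩
    have hdia : ∀ i, i ≤ K → Metric.diam (c i) ≤ C₀ * ρ ^ k * dS :=
      fun i hi => tile_upp k (c i) (hcm i hi) (hne i hi)
    have h1 := dist_le_of_chain (fun i _ => hbdd _) hci (hc0 ▸ hxA) (hcK ▸ hyB) hdia
    have hKr : (K : ℝ) ≤ 2 * (w : ℝ) + 1 := by exact_mod_cast hK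
    have hpos : (0:ℝ) ≤ C₀ * ρ ^ k * dS :=
      mul_nonneg (mul_nonneg hC₀0.le (pow_nonneg hρ0.le _)) hdS0.le
    calc dist x y ≤ ((K : ℝ) + 1) * (C₀ * ρ ^ k * dS) := h1
      _ ≤ (2 * (w : ℝ) + 2) * (C₀ * ρ ^ k * dS) :=
          mul_le_mul_of_nonneg_right (by linarith) hpos
  have hM0 : (0:ℝ) < (2 * (w : ℝ) + 2) * C₀ * dS :=
    mul_pos (mul_pos (by positivity) hC₀0) hdS0
  obtain ⟨B₀, hB₀⟩ : ∃ B₀ : ℕ, ρ ^ B₀ < dist x y / ((2 * (w : ℝ) + 2) * C₀ * dS) :=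
    exists_pow_lt_of_lt_one (div_pos hdxy hM0) hρ1
  have hPle : ∀ k, P k → k < B₀ := by
    intro k hk
    by_contra hcon
    push_neg at hcon
    have h1 : ρ ^ k ≤ ρ ^ B₀ := pow_le_pow_of_le_one hρ0.le hρ1.le hcon
    have h3 : ρ ^ B₀ * ((2 * (w : ℝ) + 2) * C₀ * dS) < dist x y := (lt_div_iff₀ hM0).mp hB₀
    have h4 : ρ ^ k * ((2 * (w : ℝ) + 2) * C₀ * dS) ≤ ρ ^ B₀ * ((2 * (w : ℝ) + 2) * C₀ * dS) :=
      mul_le_mul_of_nonneg_right h1 hM0.le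
    have h5 : dist x y ≤ ρ ^ k * ((2 * (w : ℝ) + 2) * C₀ * dS) := by
      calc dist x y ≤ (2 * (w : ℝ) + 2) * (C₀ * ρ ^ k * dS) := hPbound k hk
        _ = ρ ^ k * ((2 * (w : ℝ) + 2) * C₀ * dS) := by ring
    linarith
  obtain ⟨m, hmP, hm1⟩ : ∃ m, P m ∧ ¬ P (m + 1) := by
    refine ⟨Nat.findGreatest P B₀, Nat.findGreatest_spec (Nat.zero_le _) hP0, fun h => ?_⟩
    have h1 := hPle _ h
    have h2 := Nat.le_findGreatest (le_of_lt h1) h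
    omega
  -- separation at level m + 1
  obtain ⟨A, hA, hxA⟩ := htile (m + 1) x
  obtain ⟨B, hB, hyB⟩ := htile (m + 1) y
  have hUwAB : Uw (X (m + 1)) w A ∩ Uw (X (m + 1)) w B = ∅ := by
    rw [← Set.not_nonempty_iff_eq_empty]
    intro h
    exact hm1 ⟨A, hA, B, hB, hxA, hyB, h⟩
  have hdlow : Metric.diam A ≤ C * dist x y := hsep (m + 1) A hA B hB hUwAB x hxA y hyB
  rcases le_or_gt (n + 1) m with hcase | hcase
  · -- deep proximity: m ≥ n + 1
    obtain ⟨s, hs⟩ : ∃ s, m = n + 1 + s := ⟨m - (n + 1), by omega⟩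
    have hA' : A ∈ X (n + 1 + (s + 1)) := by
      rw [show n + 1 + (s + 1) = m + 1 by omega]; exact hA
    have hdA : κ * (τ ^ (s + 1) * Metric.diam Z) ≤ Metric.diam A := claim1 (s + 1) A hA' hxA
    have hdxyD : κ / C * τ ^ (s + 1) * Metric.diam Z ≤ dist x y := by
      rw [div_mul_eq_mul_div, div_mul_eq_mul_div, div_le_iff₀ hC0']
      calc κ * τ ^ (s + 1) * Metric.diam Z = κ * (τ ^ (s + 1) * Metric.diam Z) := by ring
        _ ≤ Metric.diam A := hdA
        _ ≤ C * dist x y := hdlow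
        _ = dist x y * C := mul_comm _ _
    obtain ⟨A', hA'', B', hB'', hxA', hyB', hUw'⟩ := hmP
    obtain ⟨K, hK, c, hc0, hcK, hcm, hci⟩ := exists_chain_of_Uw hUw'
    have himg : ∀ i, i ≤ K → g^[n] '' (c i) ∈ X (s + 1) := by
      intro i hi
      apply image_iterate_mem g X hdyn n (s + 1) (by omega)
      rw [show s + 1 + n = m by omega]
      exact hcm i hi
    have hine : ∀ i, i < K → ((g^[n] '' c i) ∩ (g^[n] '' c (i + 1))).Nonempty := by
      intro i hi
      obtain ⟨z, hz1, hz2⟩ := hci i hi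
      exact ⟨g^[n] z, Set.mem_image_of_mem _ hz1, Set.mem_image_of_mem _ hz2⟩
    have hinle : ∀ i, i ≤ K → Metric.diam (g^[n] '' c i) ≤ C₀ * ρ ^ (s + 1) * dS := by
      intro i hi
      apply tile_upp (s + 1) _ (himg i hi)
      rcases lt_or_eq_of_le hi with h | h
      · obtain ⟨z, hz, -⟩ := hci i h
        exact ⟨g^[n] z, Set.mem_image_of_mem _ hz⟩
      · subst h
        exact ⟨g^[n] y, Set.mem_image_of_mem _ (hcK ▸ hyB')⟩
    have hgdist : dist (g^[n] x) (g^[n] y) ≤ (2 * (w : ℝ) + 2) * (C₀ * ρ ^ (s + 1) * dS) := by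
      have h1 := dist_le_of_chain (c := fun i => g^[n] '' c i)
        (fun i _ => hbdd _) hine (Set.mem_image_of_mem _ (hc0 ▸ hxA'))
        (Set.mem_image_of_mem _ (hcK ▸ hyB')) hinle
      have hKr : (K : ℝ) ≤ 2 * (w : ℝ) + 1 := by exact_mod_cast hK
      have hpos : (0:ℝ) ≤ C₀ * ρ ^ (s + 1) * dS :=
        mul_nonneg (mul_nonneg hC₀0.le (pow_nonneg hρ0.le _)) hdS0.le
      calc dist (g^[n] x) (g^[n] y) ≤ ((K : ℝ) + 1) * (C₀ * ρ ^ (s + 1) * dS) := h1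
        _ ≤ (2 * (w : ℝ) + 2) * (C₀ * ρ ^ (s + 1) * dS) :=
            mul_le_mul_of_nonneg_right (by linarith) hpos
    have hratio : (κ / C) ^ ν * ρ ^ (s + 1) ≤ (dist x y / Metric.diam Z) ^ ν := by
      have h1 : κ / C * τ ^ (s + 1) ≤ dist x y / Metric.diam Z := by
        rw [le_div_iff₀ hD0]
        exact hdxyD
      have h2 : ((κ / C) * τ ^ (s + 1) : ℝ) ^ ν ≤ (dist x y / Metric.diam Z) ^ ν :=
        Real.rpow_le_rpow
          (mul_nonneg (div_nonneg hκ0.le hC0'.le) (pow_nonneg hτ0.le _)) h1 hν0.le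
      calc (κ / C) ^ ν * ρ ^ (s + 1) = (κ / C) ^ ν * ((τ ^ (s + 1) : ℝ)) ^ ν := by
            rw [hkey]
        _ = ((κ / C) * τ ^ (s + 1)) ^ ν :=
            (Real.mul_rpow (div_nonneg hκ0.le hC0'.le) (pow_nonneg hτ0.le _)).symm
        _ ≤ (dist x y / Metric.diam Z) ^ ν := h2
    calc dist (g^[n] x) (g^[n] y)
        ≤ (2 * (w : ℝ) + 2) * (C₀ * ρ ^ (s + 1) * dS) := hgdist
      _ = Γ₁ * ((κ / C) ^ ν * ρ ^ (s + 1)) := by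
          rw [hΓ₁]
          field_simp
      _ ≤ (1 + Γ₁ + Γ₂) * ((dist x y / Metric.diam Z) ^ ν) :=
          mul_le_mul (by linarith) hratio
            (mul_nonneg hβ.le (pow_nonneg hρ0.le _)) (by linarith)
  · -- shallow proximity: m ≤ n
    obtain ⟨W, hW, hxW⟩ := htile (n + 1) x
    have hWD : κ * Metric.diam Z ≤ Metric.diam W := by
      have h1 := claim1 0 W (by rw [Nat.add_zero]; exact hW) hxW
      simpa using h1
    have hWA : Metric.diam W ≤ C₀ * ρ ^ (n - m) * Metric.diam A :=
      hupp (m + 1) (n - m) A hA W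
        (by rw [show m + 1 + (n - m) = n + 1 by omega]; exact hW) ⟨x, hxA, hxW⟩
    have hdxyD : κ / (C * C₀) * Metric.diam Z ≤ dist x y := by
      have h1 : Metric.diam W ≤ C₀ * Metric.diam A := by
        calc Metric.diam W ≤ C₀ * ρ ^ (n - m) * Metric.diam A := hWA
          _ ≤ C₀ * 1 * Metric.diam A :=
              mul_le_mul_of_nonneg_right
                (mul_le_mul_of_nonneg_left (pow_le_one₀ hρ0.le hρ1.le) hC₀0.le)
                Metric.diam_nonneg
          _ = C₀ * Metric.diam A := by ring
      rw [div_mul_eq_mul_div, div_le_iff₀ (mul_pos hC0' hC₀0)]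
      calc κ * Metric.diam Z ≤ Metric.diam W := hWD
        _ ≤ C₀ * Metric.diam A := h1
        _ ≤ C₀ * (C * dist x y) := mul_le_mul_of_nonneg_left hdlow hC₀0.le
        _ = dist x y * (C * C₀) := by ring
    have hgdS : dist (g^[n] x) (g^[n] y) ≤ dS := Metric.dist_le_diam_of_mem hb trivial trivial
    have hratio : (κ / (C * C₀)) ^ ν ≤ (dist x y / Metric.diam Z) ^ ν := by
      apply Real.rpow_le_rpow (div_nonneg hκ0.le (mul_pos hC0' hC₀0).le) _ hν0.le
      rw [le_div_iff₀ hD0]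
      exact hdxyD
    calc dist (g^[n] x) (g^[n] y) ≤ dS := hgdS
      _ = Γ₂ * (κ / (C * C₀)) ^ ν := by
          rw [hΓ₂]
          field_simp
      _ ≤ (1 + Γ₁ + Γ₂) * ((dist x y / Metric.diam Z) ^ ν) :=
          mul_le_mul (by linarith) hratio hβ₂.le (by linarith)
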